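/- Let g > 0, h₀ > 0, u₀ > 0, a₀ ∈ ℝ. Define φ(h) = a₀ + h₀ + u₀²/(2g) − h − (h₀u₀)²/(2gh²) for h > 0, and a_max(U₀) = a₀ + h₀ + u₀²/(2g) − (3/(2 g^{1/3})) (h₀u₀)^{2/3}. Then for any a ∈ ℝ: (1) if a > a_max(U₀), the equation φ(h) = a has no solution h > 0; (2) if a < a_max(U₀), it has exactly two solutions h > 0; (3) if a = a_max(U₀), it has exactly one solution h > 0 (the two roots coincide). Equivalently, the stationary-wave system hu = h₀u₀, u²/2 + g(h + a) = u₀²/2 + g(h₀ + a₀) has two, one, or no solutions (u, h) with h > 0 according as a < a_max, a = a_max, or a > a_max. -/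

import Mathlib

/-- The function `φ` whose level sets give the heights reachable from
`U₀ = (u₀,h₀,a₀)` by a stationary wave with bottom level `a`. -/
noncomputable def phi (g h₀ u₀ a₀ : ℝ) (h : ℝ) : ℝ :=
  a₀ + h₀ + u₀ ^ 2 / (2 * g) - h - (h₀ * u₀) ^ 2 / (2 * g * h ^ 2)

/-- The maximal bottom level reachable by a stationary wave from `U₀`. -/
noncomputable def aMax (g h₀ u₀ a₀ : ℝ) : ℝ :=
  a₀ + h₀ + u₀ ^ 2 / (2 * g) - 3 / (2 * g ^ ((1 : ℝ) / 3)) * (h₀ * u₀) ^ ((2 : ℝ) / 3)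

set_option maxHeartbeats 1000000 in
/-- Solvability of the stationary-wave equation `φ(h) = a`: no positive solution
when `a > a_max(U₀)`, exactly two when `a < a_max(U₀)`, exactly one when
`a = a_max(U₀)`; moreover, for `h > 0` the stationary-wave system
`hu = h₀u₀`, `u²/2 + g(h+a) = u₀²/2 + g(h₀+a₀)` is equivalent to
`u = h₀u₀/h` together with `φ(h) = a`. -/
theorem stmt_2 (g h₀ u₀ a₀ : ℝ) (hg : 0 < g) (hh₀ : 0 < h₀) (hu₀ : 0 < u₀) :
    ∀ a : ℝ,
      ((aMax g h₀ u₀ a₀ < a → ¬ ∃ h : ℝ, 0 < h ∧ phi g h₀ u₀ a₀ h = a)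
      ∧ (a < aMax g h₀ u₀ a₀ →
          ∃ h₁ h₂ : ℝ, 0 < h₁ ∧ 0 < h₂ ∧ h₁ ≠ h₂ ∧
            phi g h₀ u₀ a₀ h₁ = a ∧ phi g h₀ u₀ a₀ h₂ = a ∧
            ∀ h : ℝ, 0 < h → phi g h₀ u₀ a₀ h = a → h = h₁ ∨ h = h₂)
      ∧ (a = aMax g h₀ u₀ a₀ → ∃! h : ℝ, 0 < h ∧ phi g h₀ u₀ a₀ h = a)
      ∧ ∀ u h : ℝ, 0 < h →
          ((h * u = h₀ * u₀ ∧
              u ^ 2 / 2 + g * (h + a) = u₀ ^ 2 / 2 + g * (h₀ + a₀)) ↔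
            (u = h₀ * u₀ / h ∧ phi g h₀ u₀ a₀ h = a))) := by
  intro a
  have hm : 0 < h₀ * u₀ := mul_pos hh₀ hu₀
  set b : ℝ := (h₀ * u₀) ^ ((2:ℝ)/3) / g ^ ((1:ℝ)/3) with hb_def
  have hbpos : 0 < b := div_pos (Real.rpow_pos_of_pos hm _) (Real.rpow_pos_of_pos hg _)
  have hp1 : ((h₀ * u₀) ^ ((2:ℝ)/3)) ^ (3:ℕ) = (h₀ * u₀) ^ 2 := by
    rw [← Real.rpow_natCast ((h₀ * u₀) ^ ((2:ℝ)/3)) 3, ← Real.rpow_mul hm.le]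
    norm_num
  have hp2 : (g ^ ((1:ℝ)/3)) ^ (3:ℕ) = g := by
    rw [← Real.rpow_natCast _ 3, ← Real.rpow_mul hg.le]
    norm_num
  have hgne : g ^ ((1:ℝ)/3) ≠ 0 := (Real.rpow_pos_of_pos hg _).ne'
  have hb3 : g * b ^ 3 = (h₀ * u₀) ^ 2 := by
    rw [hb_def, div_pow, hp1, hp2]
    field_simp
  have hsq : (h₀ * u₀) ^ 2 = g * b ^ 3 := hb3.symm
  have hAM : aMax g h₀ u₀ a₀ = a₀ + h₀ + u₀ ^ 2 / (2 * g) - 3 * b / 2 := by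
    rw [aMax, hb_def]
    field_simp
  -- key identity
  have hid : ∀ h : ℝ, h ≠ 0 → phi g h₀ u₀ a₀ h
      = aMax g h₀ u₀ a₀ - (h - b) ^ 2 * (2 * h + b) / (2 * h ^ 2) := by
    intro h hh
    rw [phi, hAM, hsq]
    field_simp
    ring
  have hdiff : ∀ x y : ℝ, x ≠ 0 → y ≠ 0 → phi g h₀ u₀ a₀ y - phi g h₀ u₀ a₀ x
      = (y - x) * (b ^ 3 * (x + y) - 2 * x ^ 2 * y ^ 2) / (2 * x ^ 2 * y ^ 2) := by
    intro x y hx hy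
    rw [phi, phi, hsq]
    field_simp
    ring
  have hphib : phi g h₀ u₀ a₀ b = aMax g h₀ u₀ a₀ := by
    rw [hid b hbpos.ne']
    simp
  have hle : ∀ h : ℝ, 0 < h → phi g h₀ u₀ a₀ h ≤ aMax g h₀ u₀ a₀ := by
    intro h hh
    rw [hid h hh.ne']
    have : 0 ≤ (h - b) ^ 2 * (2 * h + b) / (2 * h ^ 2) := by positivity
    linarith
  have hmono : ∀ x y : ℝ, 0 < x → x < y → y ≤ b →
      phi g h₀ u₀ a₀ x < phi g h₀ u₀ a₀ y := by
    intro x y hx hxy hyb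
    have hy : 0 < y := hx.trans hxy
    have hyb3 : y ^ 3 ≤ b ^ 3 := pow_le_pow_left₀ hy.le hyb 3
    have hnum : 0 < b ^ 3 * (x + y) - 2 * x ^ 2 * y ^ 2 := by
      nlinarith [mul_le_mul_of_nonneg_right hyb3 (by positivity : (0:ℝ) ≤ x + y),
        mul_pos (mul_pos (sub_pos.2 hxy) hx) (mul_pos hy hy),
        mul_pos (mul_pos (sub_pos.2 hxy) (by linarith : (0:ℝ) < x + y)) (mul_pos hy hy)]
    have := hdiff x y hx.ne' hy.ne'
    have hpos : 0 < (y - x) * (b ^ 3 * (x + y) - 2 * x ^ 2 * y ^ 2) / (2 * x ^ 2 * y ^ 2) := by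
      apply div_pos (mul_pos (sub_pos.2 hxy) hnum)
      positivity
    linarith
  have hanti : ∀ x y : ℝ, b ≤ x → x < y →
      phi g h₀ u₀ a₀ y < phi g h₀ u₀ a₀ x := by
    intro x y hbx hxy
    have hx : 0 < x := hbpos.trans_le hbx
    have hy : 0 < y := hx.trans hxy
    have hxb3 : b ^ 3 ≤ x ^ 3 := pow_le_pow_left₀ hbpos.le hbx 3
    have hnum : b ^ 3 * (x + y) - 2 * x ^ 2 * y ^ 2 < 0 := by
      nlinarith [mul_le_mul_of_nonneg_right hxb3 (by positivity : (0:ℝ) ≤ x + y),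
        mul_pos (mul_pos (sub_pos.2 hxy) hx) (mul_pos hx hy),
        mul_pos (mul_pos (sub_pos.2 hxy) (by linarith : (0:ℝ) < x + y)) (mul_pos hx hx)]
    have := hdiff x y hx.ne' hy.ne'
    have hneg : (y - x) * (b ^ 3 * (x + y) - 2 * x ^ 2 * y ^ 2) / (2 * x ^ 2 * y ^ 2) < 0 := by
      apply div_neg_of_neg_of_pos (mul_neg_of_pos_of_neg (sub_pos.2 hxy) hnum)
      positivity
    linarith
  have hcont : ∀ s t : ℝ, 0 < s → ContinuousOn (phi g h₀ u₀ a₀) (Set.Icc s t) := by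
    intro s t hs
    unfold phi
    apply ContinuousOn.sub
    · apply ContinuousOn.sub
      · fun_prop
      · fun_prop
    · apply ContinuousOn.div
      · fun_prop
      · fun_prop
      · intro h hh
        have h0 : 0 < h := hs.trans_le hh.1
        positivity
  refine ⟨?_, ?_, ?_, ?_⟩
  · -- no solution
    rintro hlt ⟨h, hh, hph⟩
    exact absurd (hph ▸ hle h hh) (not_le.2 hlt)
  · -- two solutions
    intro ha
    set D := aMax g h₀ u₀ a₀ - a with hD_def
    have hD : 0 < D := sub_pos.2 ha
    -- small root
    set s := min (b / 2) (Real.sqrt (b ^ 3 / (8 * D))) with hs_def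
    have hspos : 0 < s := lt_min (by linarith) (Real.sqrt_pos.2 (by positivity))
    have hsb2 : s ≤ b / 2 := min_le_left _ _
    have hs2 : s ^ 2 ≤ b ^ 3 / (8 * D) := by
      have h1 : s ≤ Real.sqrt (b ^ 3 / (8 * D)) := min_le_right _ _
      have := Real.sq_sqrt (show (0:ℝ) ≤ b ^ 3 / (8 * D) by positivity)
      nlinarith [Real.sqrt_nonneg (b ^ 3 / (8 * D))]
    have hphis : phi g h₀ u₀ a₀ s ≤ a := by
      rw [hid s hspos.ne']
      have key : 2 * s ^ 2 * D ≤ (s - b) ^ 2 * (2 * s + b) := by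
        have e1 : b ^ 2 / 4 ≤ (s - b) ^ 2 := by nlinarith
        have e2 : b ≤ 2 * s + b := by linarith
        have e3 : b ^ 2 / 4 * b ≤ (s - b) ^ 2 * (2 * s + b) :=
          mul_le_mul e1 e2 hbpos.le (sq_nonneg _)
        have e4 : 2 * s ^ 2 * D ≤ b ^ 3 / 4 := by
          have := mul_le_mul_of_nonneg_right hs2 hD.le
          calc 2 * s ^ 2 * D ≤ 2 * (b ^ 3 / (8 * D)) * D := by nlinarith
            _ = b ^ 3 / 4 := by field_simp; ring
        nlinarith
      have : D ≤ (s - b) ^ 2 * (2 * s + b) / (2 * s ^ 2) := by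
        rw [le_div_iff₀ (by positivity)]
        linarith [key]
      linarith [this]
    -- large root bound
    set t := max (2 * b) (4 * D) with ht_def
    have htb : 2 * b ≤ t := le_max_left _ _
    have htD : 4 * D ≤ t := le_max_right _ _
    have htpos : 0 < t := lt_of_lt_of_le (by linarith) htb
    have hphit : phi g h₀ u₀ a₀ t ≤ a := by
      rw [hid t htpos.ne']
      have key : 2 * t ^ 2 * D ≤ (t - b) ^ 2 * (2 * t + b) := by
        have e1 : t ^ 2 / 4 ≤ (t - b) ^ 2 := by nlinarith
        have e2 : 2 * t ≤ 2 * t + b := by linarith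
        have e3 : t ^ 2 / 4 * (2 * t) ≤ (t - b) ^ 2 * (2 * t + b) :=
          mul_le_mul e1 e2 (by linarith) (sq_nonneg _)
        nlinarith
      have : D ≤ (t - b) ^ 2 * (2 * t + b) / (2 * t ^ 2) := by
        rw [le_div_iff₀ (by positivity)]
        linarith [key]
      linarith [this]
    have hsb : s ≤ b := le_trans hsb2 (by linarith)
    have hbt : b ≤ t := by linarith
    -- IVT on [s, b]
    obtain ⟨h₁, hh₁mem, hh₁⟩ :=
      intermediate_value_Icc hsb (hcont s b hspos)
        (Set.mem_Icc.2 ⟨hphis, by rw [hphib]; linarith⟩)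
    -- IVT on [b, t] (decreasing)
    obtain ⟨h₂, hh₂mem, hh₂⟩ :=
      intermediate_value_Icc' hbt (hcont b t hbpos)
        (Set.mem_Icc.2 ⟨hphit, by rw [hphib]; linarith⟩)
    have hh₁pos : 0 < h₁ := lt_of_lt_of_le hspos hh₁mem.1
    have hh₂pos : 0 < h₂ := lt_of_lt_of_le hbpos hh₂mem.1
    have hh₁ltb : h₁ < b := by
      rcases lt_or_eq_of_le hh₁mem.2 with h | h
      · exact h
      · exfalso; rw [h] at hh₁; rw [hphib] at hh₁; linarith
    have hh₂gtb : b < h₂ := by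
      rcases lt_or_eq_of_le hh₂mem.1 with h | h
      · exact h
      · exfalso; rw [← h] at hh₂; rw [hphib] at hh₂; linarith
    refine ⟨h₁, h₂, hh₁pos, hh₂pos, ne_of_lt (hh₁ltb.trans hh₂gtb), hh₁, hh₂, ?_⟩
    intro h hh hph
    rcases lt_trichotomy h b with hcase | hcase | hcase
    · left
      rcases lt_trichotomy h h₁ with hc | hc | hc
      · exfalso
        have := hmono h h₁ hh hc (le_of_lt hh₁ltb)
        rw [hph, hh₁] at this; exact lt_irrefl a this
      · exact hc
      · exfalso
        have := hmono h₁ h hh₁pos hc (le_of_lt hcase)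
        rw [hph, hh₁] at this; exact lt_irrefl a this
    · exfalso
      rw [hcase, hphib] at hph; linarith
    · right
      rcases lt_trichotomy h h₂ with hc | hc | hc
      · exfalso
        have := hanti h h₂ (le_of_lt hcase) hc
        rw [hph, hh₂] at this; exact lt_irrefl a this
      · exact hc
      · exfalso
        have := hanti h₂ h (le_of_lt hh₂gtb) hc
        rw [hph, hh₂] at this; exact lt_irrefl a this
  · -- unique solution when a = aMax
    intro ha
    refine ⟨b, ⟨hbpos, by rw [hphib, ha]⟩, ?_⟩
    rintro h ⟨hh, hph⟩
    rw [hid h hh.ne', ha] at hph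
    have hz : (h - b) ^ 2 * (2 * h + b) / (2 * h ^ 2) = 0 := by linarith
    have h2b : 0 < 2 * h + b := by linarith
    have : (h - b) ^ 2 = 0 := by
      by_contra hc
      have : 0 < (h - b) ^ 2 := lt_of_le_of_ne (sq_nonneg _) (Ne.symm hc)
      have : 0 < (h - b) ^ 2 * (2 * h + b) / (2 * h ^ 2) := by positivity
      linarith
    have := pow_eq_zero_iff (n := 2) (by norm_num) |>.1 this
    linarith [sub_eq_zero.1 this]
  · -- equivalence of system and (u = m/h, φ(h) = a)
    intro u h hh
    constructor
    · rintro ⟨h1, h2⟩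
      have hu : u = h₀ * u₀ / h := by field_simp; linarith
      subst hu
      refine ⟨rfl, ?_⟩
      rw [phi]
      field_simp at h2 ⊢
      linear_combination (-1) * h2
    · rintro ⟨hu, hphi⟩
      subst hu
      refine ⟨by field_simp, ?_⟩
      rw [← hphi, phi]
      field_simp
      ring
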